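/- Let $T^n$ be an $n$-tree and $w : T^n \to [0,\infty)$ a weight satisfying the surrogate maximum principle with parameters $\kappa \in (0,1]$ and $C < \infty$: for all nonnegative $\mu, \rho$ and all $\delta > 0$, $\sum \mathbf{V}^\mu_\delta\, \rho \leq C (\delta |\rho|)^\kappa (\mathcal{E}_\delta[\mu] \mathcal{E}[\rho])^{(1-\kappa)/2}$. Suppose $\mu, \rho$ are nonnegative functions on $T^n$ with hereditary Carleson constants $[w,\mu]_{HC} \leq 1$ and $[w,\rho]_{HC} \leq 1$, meaning $\mathcal{E}[\mu \mathbf{1}_E] \leq \mu(E)$ and $\mathcal{E}[\rho \mathbf{1}_E] \leq \rho(E)$ for all subsets $E$. Then there exists $\kappa' > 0$ (depending only on $\kappa$) such that $\sum_{T^n} \mathbf{V}^\mu \, \rho \lesssim |\mu|^{1/2 - \kappa'}\, |\rho|^{1/2 + \kappa'}$, with implicit constant depending only on $C$ and $\kappa$; one may take $\kappa' = \frac{\kappa}{2(1+\kappa)}$. -/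

import Mathlib

open Finset
open scoped Classical

/-- A tree order: the set of elements above any given element is totally ordered. -/
def IsTreeOrder (T : Type*) [PartialOrder T] : Prop :=
  ∀ ω a b : T, ω ≤ a → ω ≤ b → a ≤ b ∨ b ≤ a

/-- The Hardy operator `I f α = ∑_{α' ≥ α} f α'`. -/
noncomputable def hI {T : Type*} [Fintype T] [PartialOrder T] (f : T → ℝ) (a : T) : ℝ :=
  ∑ b, if a ≤ b then f b else 0

/-- The adjoint Hardy operator `I* f β = ∑_{α ≤ β} f α`. -/
noncomputable def hIstar {T : Type*} [Fintype T] [PartialOrder T] (f : T → ℝ) (b : T) : ℝ :=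
  ∑ a, if a ≤ b then f a else 0

/-- `b` is a child of `β`: a maximal element of the set of elements strictly below `β`. -/
def IsChild {T : Type*} [PartialOrder T] (b β : T) : Prop :=
  b < β ∧ ∀ c, b < c → c < β → False

/-- The difference operator `Δ f β = f β - ∑_{β' ∈ ch β} f β'`. -/
noncomputable def hDelta {T : Type*} [Fintype T] [PartialOrder T] (f : T → ℝ) (β : T) : ℝ :=
  f β - ∑ b, if IsChild b β then f b else 0

/-- A superadditive function on a tree: `f β ≥ ∑_{β' ∈ ch β} f β'` for all `β`. -/
def Superadd {T : Type*} [Fintype T] [PartialOrder T] (f : T → ℝ) : Prop :=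
  ∀ β : T, (∑ b, if IsChild b β then f b else 0) ≤ f β

section helpers
variable {X : Type*} [Fintype X] [PartialOrder X]

lemma hIstar_nonneg {f : X → ℝ} (hf : ∀ a, 0 ≤ f a) (b : X) : 0 ≤ hIstar f b :=
  Finset.sum_nonneg fun a _ => by by_cases h : a ≤ b <;> simp [h, hf a]

lemma hI_nonneg {f : X → ℝ} (hf : ∀ a, 0 ≤ f a) (a : X) : 0 ≤ hI f a :=
  Finset.sum_nonneg fun b _ => by by_cases h : a ≤ b <;> simp [h, hf b]

lemma hIstar_mono {f g : X → ℝ} (h : ∀ a, f a ≤ g a) (hf : ∀ a, 0 ≤ f a) (b : X) :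
    hIstar f b ≤ hIstar g b :=
  Finset.sum_le_sum fun a _ => by by_cases hab : a ≤ b <;> simp [hab, h a]

lemma duality (f g : X → ℝ) : ∑ a, hI f a * g a = ∑ b, f b * hIstar g b := by
  calc ∑ a, hI f a * g a = ∑ a, ∑ b, (if a ≤ b then f b * g a else 0) := by
        simp [hI, Finset.sum_mul, ite_mul]
    _ = ∑ b, ∑ a, (if a ≤ b then f b * g a else 0) := Finset.sum_comm
    _ = ∑ b, f b * hIstar g b := by simp [hIstar, Finset.mul_sum, mul_ite]

lemma hI_antitone {f : X → ℝ} (hf : ∀ a, 0 ≤ f a) {a a' : X} (h : a ≤ a') :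
    hI f a' ≤ hI f a :=
  Finset.sum_le_sum fun b _ => by
    by_cases h2 : a' ≤ b
    · simp [h2, h.trans h2]
    · by_cases h1 : a ≤ b <;> simp [h1, h2, hf b]

lemma hIstar_restrict {μ : X → ℝ} {E : Set X}
    (hE : ∀ ⦃u v : X⦄, u ≤ v → v ∈ E → u ∈ E) {x : X} (hx : x ∈ E) :
    hIstar (fun y => if y ∈ E then μ y else 0) x = hIstar μ x := by
  unfold hIstar
  refine Finset.sum_congr rfl fun a _ => ?_
  by_cases h : a ≤ x
  · simp [h, hE h hx]
  · simp [h]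

lemma cauchy_schwarz (w f g : X → ℝ) (hw : ∀ a, 0 ≤ w a) :
    (∑ a, w a * f a * g a) ^ 2 ≤ (∑ a, w a * f a ^ 2) * (∑ a, w a * g a ^ 2) := by
  have h := Finset.sum_mul_sq_le_sq_mul_sq Finset.univ
    (fun a => Real.sqrt (w a) * f a) (fun a => Real.sqrt (w a) * g a)
  have e1 : ∀ a : X, (Real.sqrt (w a) * f a) * (Real.sqrt (w a) * g a) = w a * f a * g a := by
    intro a
    have hs : Real.sqrt (w a) * Real.sqrt (w a) = w a := Real.mul_self_sqrt (hw a)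
    calc (Real.sqrt (w a) * f a) * (Real.sqrt (w a) * g a)
        = (Real.sqrt (w a) * Real.sqrt (w a)) * f a * g a := by ring
      _ = w a * f a * g a := by rw [hs]
  have e2 : ∀ a : X, (Real.sqrt (w a) * f a) ^ 2 = w a * f a ^ 2 := by
    intro a
    have hs : Real.sqrt (w a) * Real.sqrt (w a) = w a := Real.mul_self_sqrt (hw a)
    calc (Real.sqrt (w a) * f a) ^ 2 = (Real.sqrt (w a) * Real.sqrt (w a)) * f a ^ 2 := by ring
      _ = w a * f a ^ 2 := by rw [hs]
  have e3 : ∀ a : X, (Real.sqrt (w a) * g a) ^ 2 = w a * g a ^ 2 := by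
    intro a
    have hs : Real.sqrt (w a) * Real.sqrt (w a) = w a := Real.mul_self_sqrt (hw a)
    calc (Real.sqrt (w a) * g a) ^ 2 = (Real.sqrt (w a) * Real.sqrt (w a)) * g a ^ 2 := by ring
      _ = w a * g a ^ 2 := by rw [hs]
  simp only [show ∀ a : X, √(w a) * f a * (√(w a) * g a) = w a * f a * g a from e1, e2, e3] at h
  exact h

end helpers

section arith
variable {κ C : ℝ}

lemma solveX (hκ0 : 0 < κ) (hκ1 : κ ≤ 1) (hC : 0 ≤ C) {δ M X : ℝ}
    (hδ : 0 < δ) (hM : 0 < M) (hX : 0 ≤ X)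
    (h : X ≤ C * δ ^ κ * M ^ ((1+κ)/2) * X ^ ((1-κ)/2)) :
    X ≤ C ^ ((2:ℝ)/(1+κ)) * δ ^ (2*κ/(1+κ)) * M := by
  have h1κ : (0:ℝ) < 1 + κ := by linarith
  rcases hX.eq_or_lt with h0 | hXpos
  · rw [← h0]
    positivity
  · have hP : (0:ℝ) < X ^ ((1-κ)/2) := Real.rpow_pos_of_pos hXpos _
    have hXsplit : X ^ ((1+κ)/2) * X ^ ((1-κ)/2) = X := by
      rw [← Real.rpow_add hXpos]
      have : (1+κ)/2 + (1-κ)/2 = (1:ℝ) := by ring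
      rw [this, Real.rpow_one]
    have h2 : X ^ ((1+κ)/2) ≤ C * δ ^ κ * M ^ ((1+κ)/2) := by
      refine le_of_mul_le_mul_right ?_ hP
      rw [hXsplit]
      exact h
    have h3 := Real.rpow_le_rpow (Real.rpow_nonneg hXpos.le _) h2
      (by positivity : (0:ℝ) ≤ 2/(1+κ))
    rw [← Real.rpow_mul hXpos.le] at h3
    have he1 : (1+κ)/2 * (2/(1+κ)) = 1 := by field_simp
    rw [he1, Real.rpow_one] at h3
    calc X ≤ (C * δ ^ κ * M ^ ((1+κ)/2)) ^ ((2:ℝ)/(1+κ)) := h3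
      _ = C ^ ((2:ℝ)/(1+κ)) * δ ^ (2*κ/(1+κ)) * M := by
          rw [Real.mul_rpow (by positivity) (by positivity),
            Real.mul_rpow hC (by positivity), ← Real.rpow_mul hδ.le,
            ← Real.rpow_mul hM.le, he1, Real.rpow_one]
          ring_nf

lemma L2full (hκ0 : 0 < κ) (hκ1 : κ ≤ 1) (hC : 0 ≤ C) {M R : ℝ} (hM : 0 < M) (hR : 0 < R) :
    C * (((2:ℝ)^(2*(1+κ)) * (M/R)^(κ/4)) * R) ^ κ *
      ((C^((2:ℝ)/(1+κ)) * ((2:ℝ)^(2*(1+κ)) * (M/R)^(κ/4))^(2*κ/(1+κ)) * M) * R) ^ ((1-κ)/2)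
    ≤ C^((2:ℝ)/(1+κ)) * ((2:ℝ)^(2*(1+κ)))^(2*κ/(1+κ)) *
        M^((1:ℝ)/2 - κ/(2*(1+κ))) * R^((1:ℝ)/2 + κ/(2*(1+κ))) := by
  have h1κ : (0:ℝ) < 1 + κ := by linarith
  rcases hC.eq_or_lt with h0 | hCpos
  · rw [← h0]
    rw [Real.zero_rpow (by positivity : (0:ℝ) < 2/(1+κ)).ne']
    simp
  · have hτ : (0:ℝ) < (2:ℝ)^(2*(1+κ)) := Real.rpow_pos_of_pos two_pos _
    have hq : (0:ℝ) < (M/R)^(κ/4) := Real.rpow_pos_of_pos (div_pos hM hR) _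
    have hD : (0:ℝ) < (2:ℝ)^(2*(1+κ)) * (M/R)^(κ/4) := mul_pos hτ hq
    have hC2 : (0:ℝ) < C^((2:ℝ)/(1+κ)) := Real.rpow_pos_of_pos hCpos _
    have hDR : (0:ℝ) < ((2:ℝ)^(2*(1+κ)) * (M/R)^(κ/4)) * R := mul_pos hD hR
    have hDe : (0:ℝ) < ((2:ℝ)^(2*(1+κ)) * (M/R)^(κ/4))^(2*κ/(1+κ)) :=
      Real.rpow_pos_of_pos hD _
    have hQ : (0:ℝ) < C^((2:ℝ)/(1+κ)) * ((2:ℝ)^(2*(1+κ)) * (M/R)^(κ/4))^(2*κ/(1+κ)) * M :=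
      mul_pos (mul_pos hC2 hDe) hM
    have hQR : (0:ℝ) < (C^((2:ℝ)/(1+κ)) * ((2:ℝ)^(2*(1+κ)) * (M/R)^(κ/4))^(2*κ/(1+κ)) * M) * R :=
      mul_pos hQ hR
    have hDRκ : (0:ℝ) < (((2:ℝ)^(2*(1+κ)) * (M/R)^(κ/4)) * R) ^ κ := Real.rpow_pos_of_pos hDR _
    have hQRp : (0:ℝ) < ((C^((2:ℝ)/(1+κ)) * ((2:ℝ)^(2*(1+κ)) * (M/R)^(κ/4))^(2*κ/(1+κ)) * M) * R) ^ ((1-κ)/2) :=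
      Real.rpow_pos_of_pos hQR _
    have hτe : (0:ℝ) < ((2:ℝ)^(2*(1+κ)))^(2*κ/(1+κ)) := Real.rpow_pos_of_pos hτ _
    have hMa : (0:ℝ) < M^((1:ℝ)/2 - κ/(2*(1+κ))) := Real.rpow_pos_of_pos hM _
    have hRb : (0:ℝ) < R^((1:ℝ)/2 + κ/(2*(1+κ))) := Real.rpow_pos_of_pos hR _
    have hlδ : Real.log ((2:ℝ)^(2*(1+κ)) * (M/R)^(κ/4))
        = 2*(1+κ)*Real.log 2 + κ/4*(Real.log M - Real.log R) := by
      rw [Real.log_mul hτ.ne' hq.ne', Real.log_rpow two_pos, Real.log_rpow (div_pos hM hR),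
        Real.log_div hM.ne' hR.ne']
    apply le_of_eq
    refine Real.log_injOn_pos (Set.mem_Ioi.2 (by positivity)) (Set.mem_Ioi.2 (by positivity)) ?_
    rw [Real.log_mul (mul_pos hCpos hDRκ).ne' hQRp.ne',
      Real.log_mul hCpos.ne' hDRκ.ne',
      Real.log_rpow hDR, Real.log_rpow hQR,
      Real.log_mul hD.ne' hR.ne',
      Real.log_mul hQ.ne' hR.ne',
      Real.log_mul (mul_pos hC2 hDe).ne' hM.ne',
      Real.log_mul hC2.ne' hDe.ne',
      Real.log_rpow hCpos, Real.log_rpow hD,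
      hlδ,
      Real.log_mul (mul_pos (mul_pos hC2 hτe) hMa).ne' hRb.ne',
      Real.log_mul (mul_pos hC2 hτe).ne' hMa.ne',
      Real.log_mul hC2.ne' hτe.ne',
      Real.log_rpow hCpos, Real.log_rpow hτ, Real.log_rpow two_pos,
      Real.log_rpow hM, Real.log_rpow hR]
    field_simp
    ring
end arith

section key
variable {κ C : ℝ} {X : Type*} [Fintype X] [PartialOrder X]

set_option maxHeartbeats 2000000 in
lemma key (hκ0 : 0 < κ) (hκ1 : κ ≤ 1) (hC : 0 ≤ C)
    (w : X → ℝ) (hw : ∀ a, 0 ≤ w a)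
    (hSMP : ∀ (μ ρ : X → ℝ), (∀ a, 0 ≤ μ a) → (∀ a, 0 ≤ ρ a) →
        ∀ δ : ℝ, 0 < δ →
        ∑ a, hI (fun x =>
            (if hI (fun y => w y * hIstar μ y) x ≤ δ then 1 else 0) *
              (w x * hIstar μ x)) a * ρ a
          ≤ C * (δ * ∑ a, ρ a) ^ κ *
            ((∑ a, (if hI (fun y => w y * hIstar μ y) a ≤ δ then 1 else 0) *
                (w a * hIstar μ a ^ 2)) *
              (∑ a, w a * hIstar ρ a ^ 2)) ^ ((1 - κ) / 2)) :
    ∀ k : ℕ, ∀ μ ρ : X → ℝ, (∀ a, 0 ≤ μ a) → (∀ a, 0 ≤ ρ a) →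
      (∀ E : Set X,
        (∑ a, w a * hIstar (fun x => if x ∈ E then μ x else 0) a ^ 2) ≤
          ∑ a, if a ∈ E then μ a else 0) →
      (∀ E : Set X,
        (∑ a, w a * hIstar (fun x => if x ∈ E then ρ x else 0) a ^ 2) ≤
          ∑ a, if a ∈ E then ρ a else 0) →
      (∑ a, μ a) ≤ 2^k * (∑ a, ρ a) →
      ∑ a, hI (fun x => w x * hIstar μ x) a * ρ a ≤
        (1 + 2 * C^((2:ℝ)/(1+κ)) * ((2:ℝ)^(2*(1+κ)))^(2*κ/(1+κ))) *
          (∑ a, μ a) ^ ((1:ℝ)/2 - κ/(2*(1+κ))) * (∑ a, ρ a) ^ ((1:ℝ)/2 + κ/(2*(1+κ))) := by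
  have h1κ : (0:ℝ) < 1 + κ := by linarith
  have hs2 : κ/(2*(1+κ)) < 1/2 := by
    rw [div_lt_iff₀ (by positivity)]
    linarith
  have hs0 : 0 < κ/(2*(1+κ)) := by positivity
  have ha : 0 < (1:ℝ)/2 - κ/(2*(1+κ)) := by linarith
  have hb : 0 < (1:ℝ)/2 + κ/(2*(1+κ)) := by linarith
  have hC2 : (0:ℝ) ≤ C^((2:ℝ)/(1+κ)) := Real.rpow_nonneg hC _
  have hτe : (0:ℝ) ≤ ((2:ℝ)^(2*(1+κ)))^(2*κ/(1+κ)) :=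
    Real.rpow_nonneg (Real.rpow_nonneg (by norm_num) _) _
  have hK1 : (1:ℝ) ≤ 1 + 2 * C^((2:ℝ)/(1+κ)) * ((2:ℝ)^(2*(1+κ)))^(2*κ/(1+κ)) := by nlinarith
  have hzero : ∀ μ ρ : X → ℝ, (∀ a, 0 ≤ μ a) → (∑ a, μ a) = 0 →
      ∑ a, hI (fun x => w x * hIstar μ x) a * ρ a = 0 := by
    intro μ ρ hμ h0
    have hμ0 : ∀ a ∈ Finset.univ, μ a = 0 :=
      (Finset.sum_eq_zero_iff_of_nonneg (fun a _ => hμ a)).mp h0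
    have hI0 : ∀ x : X, hIstar μ x = 0 := by
      intro x
      refine Finset.sum_eq_zero fun a _ => ?_
      rw [hμ0 a (Finset.mem_univ a)]
      simp
    refine Finset.sum_eq_zero fun a _ => ?_
    have : hI (fun x => w x * hIstar μ x) a = 0 := by
      refine Finset.sum_eq_zero fun b _ => ?_
      by_cases h : a ≤ b <;> simp [h, hI0 b]
    rw [this, zero_mul]
  intro k
  induction k with
  | zero =>
    intro μ ρ hμ hρ hCarμ hCarρ hmass
    rw [pow_zero, one_mul] at hmass
    rcases (Finset.sum_nonneg (fun a _ => hμ a)).eq_or_lt with hM0 | hMpos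
    · rw [hzero μ ρ hμ hM0.symm, ← hM0, Real.zero_rpow (ne_of_gt ha)]
      simp
    · have hRpos : 0 < ∑ a, ρ a := lt_of_lt_of_le hMpos hmass
      have hEμ : (∑ a, w a * hIstar μ a ^ 2) ≤ ∑ a, μ a := by
        have := hCarμ Set.univ
        simpa using this
      have hEρ : (∑ a, w a * hIstar ρ a ^ 2) ≤ ∑ a, ρ a := by
        have := hCarρ Set.univ
        simpa using this
      have hdual : ∑ a, hI (fun x => w x * hIstar μ x) a * ρ a
          = ∑ b, w b * hIstar μ b * hIstar ρ b := duality _ _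
      have hcs := cauchy_schwarz w (hIstar μ) (hIstar ρ) hw
      have hEρ0 : (0:ℝ) ≤ ∑ a, w a * hIstar ρ a ^ 2 :=
        Finset.sum_nonneg fun a _ => mul_nonneg (hw a) (sq_nonneg _)
      have hsq : (∑ b, w b * hIstar μ b * hIstar ρ b) ^ 2 ≤ (∑ a, μ a) * (∑ a, ρ a) :=
        le_trans hcs (mul_le_mul hEμ hEρ hEρ0 hMpos.le)
      have hform0 : 0 ≤ ∑ b, w b * hIstar μ b * hIstar ρ b :=
        Finset.sum_nonneg fun b _ =>
          mul_nonneg (mul_nonneg (hw b) (hIstar_nonneg hμ b)) (hIstar_nonneg hρ b)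
      have hle : ∑ b, w b * hIstar μ b * hIstar ρ b ≤ Real.sqrt ((∑ a, μ a) * (∑ a, ρ a)) :=
        (Real.le_sqrt hform0 (mul_nonneg hMpos.le hRpos.le)).mpr hsq
      rw [hdual]
      refine le_trans hle ?_
      rw [Real.sqrt_eq_rpow, Real.mul_rpow hMpos.le hRpos.le]
      have e1 : (∑ a, μ a) ^ ((1:ℝ)/2)
          = (∑ a, μ a) ^ ((1:ℝ)/2 - κ/(2*(1+κ))) * (∑ a, μ a) ^ (κ/(2*(1+κ))) := by
        rw [← Real.rpow_add hMpos]
        ring_nf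
      have e2 : (∑ a, μ a) ^ (κ/(2*(1+κ))) ≤ (∑ a, ρ a) ^ (κ/(2*(1+κ))) :=
        Real.rpow_le_rpow hMpos.le hmass hs0.le
      have e3 : (∑ a, ρ a) ^ (κ/(2*(1+κ))) * (∑ a, ρ a) ^ ((1:ℝ)/2)
          = (∑ a, ρ a) ^ ((1:ℝ)/2 + κ/(2*(1+κ))) := by
        rw [← Real.rpow_add hRpos]
        ring_nf
      calc (∑ a, μ a) ^ ((1:ℝ)/2) * (∑ a, ρ a) ^ ((1:ℝ)/2)
          = (∑ a, μ a) ^ ((1:ℝ)/2 - κ/(2*(1+κ))) *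
              ((∑ a, μ a) ^ (κ/(2*(1+κ))) * (∑ a, ρ a) ^ ((1:ℝ)/2)) := by rw [e1]; ring
        _ ≤ (∑ a, μ a) ^ ((1:ℝ)/2 - κ/(2*(1+κ))) *
              ((∑ a, ρ a) ^ (κ/(2*(1+κ))) * (∑ a, ρ a) ^ ((1:ℝ)/2)) := by
            refine mul_le_mul_of_nonneg_left ?_ (Real.rpow_nonneg hMpos.le _)
            exact mul_le_mul_of_nonneg_right e2 (Real.rpow_nonneg hRpos.le _)
        _ = (∑ a, μ a) ^ ((1:ℝ)/2 - κ/(2*(1+κ))) * (∑ a, ρ a) ^ ((1:ℝ)/2 + κ/(2*(1+κ))) := by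
            rw [e3]
        _ ≤ (1 + 2 * C^((2:ℝ)/(1+κ)) * ((2:ℝ)^(2*(1+κ)))^(2*κ/(1+κ))) *
              (∑ a, μ a) ^ ((1:ℝ)/2 - κ/(2*(1+κ))) * (∑ a, ρ a) ^ ((1:ℝ)/2 + κ/(2*(1+κ))) := by
            rw [mul_assoc]
            exact le_mul_of_one_le_left (by positivity) hK1
  | succ k ih =>
    intro μ ρ hμ hρ hCarμ hCarρ hmass
    rcases (Finset.sum_nonneg (fun a (_ : a ∈ Finset.univ) => hμ a)).eq_or_lt with hM0 | hMpos
    · rw [hzero μ ρ hμ hM0.symm, ← hM0, Real.zero_rpow (ne_of_gt ha)]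
      simp
    by_cases hcase : (∑ a, μ a) ≤ 2^k * ∑ a, ρ a
    · exact ih μ ρ hμ hρ hCarμ hCarρ hcase
    push_neg at hcase
    have hRpos : 0 < ∑ a, ρ a := by
      by_contra h
      push_neg at h
      have h0 : ∑ a, ρ a = 0 := le_antisymm h (Finset.sum_nonneg fun a _ => hρ a)
      rw [h0, mul_zero] at hmass
      linarith
    have hpk : (1:ℝ) ≤ 2^k := one_le_pow₀ one_le_two
    have hRM : ∑ a, ρ a ≤ ∑ a, μ a :=
      le_trans (le_mul_of_one_le_left hRpos.le hpk) hcase.le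
    have hEμ : (∑ a, w a * hIstar μ a ^ 2) ≤ ∑ a, μ a := by
      have := hCarμ Set.univ
      simpa using this
    have hEρ : (∑ a, w a * hIstar ρ a ^ 2) ≤ ∑ a, ρ a := by
      have := hCarρ Set.univ
      simpa using this
    have hEμ0 : (0:ℝ) ≤ ∑ a, w a * hIstar μ a ^ 2 :=
      Finset.sum_nonneg fun a _ => mul_nonneg (hw a) (sq_nonneg _)
    have hEρ0 : (0:ℝ) ≤ ∑ a, w a * hIstar ρ a ^ 2 :=
      Finset.sum_nonneg fun a _ => mul_nonneg (hw a) (sq_nonneg _)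
    set δ : ℝ := (2:ℝ)^(2*(1+κ)) * ((∑ a, μ a)/(∑ a, ρ a))^(κ/4) with hδdef
    have hq1 : (1:ℝ) ≤ ((∑ a, μ a)/(∑ a, ρ a))^(κ/4) := by
      have h1 : (1:ℝ) ≤ (∑ a, μ a)/(∑ a, ρ a) := (one_le_div hRpos).mpr hRM
      calc (1:ℝ) = ((∑ a, μ a)/(∑ a, ρ a)) ^ (0:ℝ) := (Real.rpow_zero _).symm
        _ ≤ _ := Real.rpow_le_rpow_of_exponent_le h1 (by linarith)
    have hτpos : (0:ℝ) < (2:ℝ)^(2*(1+κ)) := Real.rpow_pos_of_pos two_pos _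
    have hτ2 : (2:ℝ) ≤ (2:ℝ)^(2*(1+κ)) := by
      calc (2:ℝ) = (2:ℝ)^(1:ℝ) := (Real.rpow_one 2).symm
        _ ≤ _ := Real.rpow_le_rpow_of_exponent_le one_le_two (by linarith)
    have hτδ : (2:ℝ)^(2*(1+κ)) ≤ δ := le_mul_of_one_le_right hτpos.le hq1
    have hδ2 : (2:ℝ) ≤ δ := le_trans hτ2 hτδ
    have hδpos : (0:ℝ) < δ := lt_of_lt_of_le two_pos hδ2
    have gnonneg : ∀ x : X, 0 ≤ w x * hIstar μ x :=
      fun x => mul_nonneg (hw x) (hIstar_nonneg hμ x)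
    -- splitting
    have hsplit : ∑ a, hI (fun x => w x * hIstar μ x) a * ρ a
        = (∑ a, hI (fun x =>
            (if hI (fun y => w y * hIstar μ y) x ≤ δ then 1 else 0) *
              (w x * hIstar μ x)) a * ρ a)
          + ∑ b, (if hI (fun y => w y * hIstar μ y) b ≤ δ then 0
              else w b * hIstar μ b * hIstar ρ b) := by
      rw [duality, duality, ← Finset.sum_add_distrib]
      refine Finset.sum_congr rfl fun b _ => ?_
      by_cases h : hI (fun y => w y * hIstar μ y) b ≤ δ <;> simp [h]
    -- truncated energy Y
    have hY0 : (0:ℝ) ≤ ∑ a, (if hI (fun y => w y * hIstar μ y) a ≤ δ then 1 else 0) *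
        (w a * hIstar μ a ^ 2) := by
      refine Finset.sum_nonneg fun a _ => ?_
      by_cases h : hI (fun y => w y * hIstar μ y) a ≤ δ
      · simpa [h] using mul_nonneg (hw a) (sq_nonneg _)
      · simp [h]
    have hdualY : ∑ a, hI (fun x =>
          (if hI (fun y => w y * hIstar μ y) x ≤ δ then 1 else 0) *
            (w x * hIstar μ x)) a * μ a
        = ∑ a, (if hI (fun y => w y * hIstar μ y) a ≤ δ then 1 else 0) *
            (w a * hIstar μ a ^ 2) := by
      rw [duality]
      refine Finset.sum_congr rfl fun b _ => ?_
      by_cases h : hI (fun y => w y * hIstar μ y) b ≤ δ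
      · simp only [h, if_true]
        ring
      · simp [h]
    have hYEμ : (∑ a, (if hI (fun y => w y * hIstar μ y) a ≤ δ then 1 else 0) *
          (w a * hIstar μ a ^ 2)) ≤ ∑ a, w a * hIstar μ a ^ 2 := by
      refine Finset.sum_le_sum fun a _ => ?_
      by_cases h : hI (fun y => w y * hIstar μ y) a ≤ δ
      · simp [h]
      · simpa [h] using mul_nonneg (hw a) (sq_nonneg _)
    have hSMPμ := hSMP μ μ hμ hμ δ hδpos
    rw [hdualY] at hSMPμ
    have hp0 : (0:ℝ) ≤ (1-κ)/2 := by linarith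
    have hchain : (∑ a, (if hI (fun y => w y * hIstar μ y) a ≤ δ then 1 else 0) *
          (w a * hIstar μ a ^ 2))
        ≤ C * δ^κ * (∑ a, μ a)^((1+κ)/2) *
          (∑ a, (if hI (fun y => w y * hIstar μ y) a ≤ δ then 1 else 0) *
            (w a * hIstar μ a ^ 2))^((1-κ)/2) := by
      have hMM : (∑ a, μ a)^κ * (∑ a, μ a)^((1-κ)/2) = (∑ a, μ a)^((1+κ)/2) := by
        rw [← Real.rpow_add hMpos]
        congr 1
        ring
      calc (∑ a, (if hI (fun y => w y * hIstar μ y) a ≤ δ then 1 else 0) *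
            (w a * hIstar μ a ^ 2))
          ≤ C * (δ * ∑ a, μ a)^κ *
            ((∑ a, (if hI (fun y => w y * hIstar μ y) a ≤ δ then 1 else 0) *
              (w a * hIstar μ a ^ 2)) * (∑ a, w a * hIstar μ a ^ 2))^((1-κ)/2) := hSMPμ
        _ ≤ C * (δ * ∑ a, μ a)^κ *
            ((∑ a, (if hI (fun y => w y * hIstar μ y) a ≤ δ then 1 else 0) *
              (w a * hIstar μ a ^ 2)) * (∑ a, μ a))^((1-κ)/2) := by
            refine mul_le_mul_of_nonneg_left ?_
              (mul_nonneg hC (Real.rpow_nonneg (mul_nonneg hδpos.le hMpos.le) _))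
            exact Real.rpow_le_rpow (mul_nonneg hY0 hEμ0)
              (mul_le_mul_of_nonneg_left hEμ hY0) hp0
        _ = C * δ^κ * (∑ a, μ a)^((1+κ)/2) *
            (∑ a, (if hI (fun y => w y * hIstar μ y) a ≤ δ then 1 else 0) *
              (w a * hIstar μ a ^ 2))^((1-κ)/2) := by
            rw [Real.mul_rpow hδpos.le hMpos.le, Real.mul_rpow hY0 hMpos.le, ← hMM]
            ring
    have hYle : (∑ a, (if hI (fun y => w y * hIstar μ y) a ≤ δ then 1 else 0) *
          (w a * hIstar μ a ^ 2)) ≤ C^((2:ℝ)/(1+κ)) * δ^(2*κ/(1+κ)) * (∑ a, μ a) :=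
      solveX hκ0 hκ1 hC hδpos hMpos hY0 hchain
    -- Term A bound
    have hSMPρ := hSMP μ ρ hμ hρ δ hδpos
    have hTermA : (∑ a, hI (fun x =>
          (if hI (fun y => w y * hIstar μ y) x ≤ δ then 1 else 0) *
            (w x * hIstar μ x)) a * ρ a)
        ≤ C^((2:ℝ)/(1+κ)) * ((2:ℝ)^(2*(1+κ)))^(2*κ/(1+κ)) *
            (∑ a, μ a)^((1:ℝ)/2 - κ/(2*(1+κ))) * (∑ a, ρ a)^((1:ℝ)/2 + κ/(2*(1+κ))) := by
      calc (∑ a, hI (fun x =>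
            (if hI (fun y => w y * hIstar μ y) x ≤ δ then 1 else 0) *
              (w x * hIstar μ x)) a * ρ a)
          ≤ C * (δ * ∑ a, ρ a)^κ *
            ((∑ a, (if hI (fun y => w y * hIstar μ y) a ≤ δ then 1 else 0) *
              (w a * hIstar μ a ^ 2)) * (∑ a, w a * hIstar ρ a ^ 2))^((1-κ)/2) := hSMPρ
        _ ≤ C * (δ * ∑ a, ρ a)^κ *
            ((C^((2:ℝ)/(1+κ)) * δ^(2*κ/(1+κ)) * (∑ a, μ a)) * (∑ a, ρ a))^((1-κ)/2) := by
            refine mul_le_mul_of_nonneg_left ?_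
              (mul_nonneg hC (Real.rpow_nonneg (mul_nonneg hδpos.le hRpos.le) _))
            refine Real.rpow_le_rpow (mul_nonneg hY0 hEρ0) ?_ hp0
            exact mul_le_mul hYle hEρ hEρ0
              (mul_nonneg (mul_nonneg (Real.rpow_nonneg hC _)
                (Real.rpow_nonneg hδpos.le _)) hMpos.le)
        _ ≤ C^((2:ℝ)/(1+κ)) * ((2:ℝ)^(2*(1+κ)))^(2*κ/(1+κ)) *
            (∑ a, μ a)^((1:ℝ)/2 - κ/(2*(1+κ))) * (∑ a, ρ a)^((1:ℝ)/2 + κ/(2*(1+κ))) := by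
            rw [hδdef]
            exact L2full hκ0 hκ1 hC hMpos hRpos
    -- Term B : downset D
    obtain ⟨D, hDmem⟩ : ∃ D : Set X, ∀ x : X, x ∈ D ↔ ¬ hI (fun y => w y * hIstar μ y) x ≤ δ :=
      ⟨{x | ¬ hI (fun y => w y * hIstar μ y) x ≤ δ}, fun x => Iff.rfl⟩
    have hDdown : ∀ ⦃u v : X⦄, u ≤ v → v ∈ D → u ∈ D := by
      intro u v huv hv
      exact (hDmem u).mpr fun hu => (hDmem v).mp hv (le_trans (hI_antitone gnonneg huv) hu)
    have hμD0 : ∀ a : X, 0 ≤ (if a ∈ D then μ a else 0) := fun a => by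
      by_cases h : a ∈ D <;> simp [h, hμ a]
    have hρD0 : ∀ a : X, 0 ≤ (if a ∈ D then ρ a else 0) := fun a => by
      by_cases h : a ∈ D <;> simp [h, hρ a]
    have hgD : ∀ x : X, 0 ≤ w x * hIstar (fun y => if y ∈ D then μ y else 0) x :=
      fun x => mul_nonneg (hw x) (hIstar_nonneg hμD0 x)
    have hTermB1 : (∑ b, (if hI (fun y => w y * hIstar μ y) b ≤ δ then 0
          else w b * hIstar μ b * hIstar ρ b))
        ≤ ∑ a, hI (fun x => w x * hIstar (fun y => if y ∈ D then μ y else 0) x) a * ρ a := by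
      calc (∑ b, (if hI (fun y => w y * hIstar μ y) b ≤ δ then 0
            else w b * hIstar μ b * hIstar ρ b))
          ≤ ∑ b, w b * hIstar (fun y => if y ∈ D then μ y else 0) b *
              hIstar (fun y => if y ∈ D then ρ y else 0) b := by
            refine Finset.sum_le_sum fun b _ => ?_
            by_cases h : hI (fun y => w y * hIstar μ y) b ≤ δ
            · simp only [h, if_true]
              exact mul_nonneg (hgD b) (hIstar_nonneg hρD0 b)
            · have hbD : b ∈ D := (hDmem b).mpr h
              rw [if_neg h, hIstar_restrict hDdown hbD, hIstar_restrict hDdown hbD]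
        _ = ∑ a, hI (fun x => w x * hIstar (fun y => if y ∈ D then μ y else 0) x) a *
              (if a ∈ D then ρ a else 0) := by
            rw [duality]
        _ ≤ ∑ a, hI (fun x => w x * hIstar (fun y => if y ∈ D then μ y else 0) x) a * ρ a := by
            refine Finset.sum_le_sum fun a _ => ?_
            refine mul_le_mul_of_nonneg_left ?_ (hI_nonneg hgD a)
            by_cases h : a ∈ D <;> simp [h, hρ a]
    have hCarμD : ∀ E : Set X,
        (∑ a, w a * hIstar (fun x => if x ∈ E then (if x ∈ D then μ x else 0) else 0) a ^ 2) ≤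
          ∑ a, if a ∈ E then (if a ∈ D then μ a else 0) else 0 := by
      intro E
      refine le_trans (le_of_eq ?_) (le_trans (hCarμ (E ∩ D)) (le_of_eq ?_))
      · refine Finset.sum_congr rfl fun a _ => ?_
        congr 2
        congr 1
        funext x
        by_cases h1 : x ∈ E <;> by_cases h2 : x ∈ D <;>
          simp [h1, h2, Set.mem_inter_iff]
      · refine Finset.sum_congr rfl fun a _ => ?_
        by_cases h1 : a ∈ E <;> by_cases h2 : a ∈ D <;>
          simp [h1, h2, Set.mem_inter_iff]
    -- Chebyshev
    have hcheb : δ * (∑ a, (if a ∈ D then μ a else 0)) ≤ ∑ a, μ a := by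
      have h2 : ∀ a : X, δ * (if a ∈ D then μ a else 0) ≤
          hI (fun y => w y * hIstar μ y) a * μ a := by
        intro a
        by_cases h : a ∈ D
        · simp only [h, if_true]
          exact mul_le_mul_of_nonneg_right (le_of_lt (not_le.mp ((hDmem a).mp h))) (hμ a)
        · simp only [h, if_false, mul_zero]
          exact mul_nonneg (hI_nonneg gnonneg a) (hμ a)
      calc δ * (∑ a, (if a ∈ D then μ a else 0))
          = ∑ a, δ * (if a ∈ D then μ a else 0) := Finset.mul_sum _ _ _
        _ ≤ ∑ a, hI (fun y => w y * hIstar μ y) a * μ a := Finset.sum_le_sum fun a _ => h2 a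
        _ = ∑ b, (w b * hIstar μ b) * hIstar μ b := duality _ _
        _ = ∑ b, w b * hIstar μ b ^ 2 := by
            refine Finset.sum_congr rfl fun b _ => ?_
            ring
        _ ≤ ∑ a, μ a := hEμ
    have hμDsum0 : (0:ℝ) ≤ ∑ a, (if a ∈ D then μ a else 0) :=
      Finset.sum_nonneg fun a _ => hμD0 a
    have hμDMδ : (∑ a, (if a ∈ D then μ a else 0)) ≤ (∑ a, μ a)/δ := by
      rw [le_div_iff₀ hδpos]
      linarith [hcheb]
    have hmassD : (∑ a, (if a ∈ D then μ a else 0)) ≤ 2^k * ∑ a, ρ a := by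
      have h2' : (∑ a, μ a)/δ ≤ (∑ a, μ a)/2 :=
        div_le_div_of_nonneg_left hMpos.le two_pos hδ2
      have h3 : (∑ a, μ a)/2 ≤ 2^k * ∑ a, ρ a := by
        rw [div_le_iff₀ two_pos]
        rw [pow_succ] at hmass
        linarith
      linarith
    have hIH := ih (fun x => if x ∈ D then μ x else 0) ρ hμD0 hρ hCarμD hCarρ hmassD
    -- δ^a ≥ 2
    have hδa : (2:ℝ) ≤ δ ^ ((1:ℝ)/2 - κ/(2*(1+κ))) := by
      have hτa : ((2:ℝ)^(2*(1+κ)))^((1:ℝ)/2 - κ/(2*(1+κ))) = 2 := by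
        rw [← Real.rpow_mul (by norm_num : (0:ℝ) ≤ 2)]
        rw [show 2*(1+κ) * ((1:ℝ)/2 - κ/(2*(1+κ))) = 1 by field_simp; ring]
        exact Real.rpow_one 2
      calc (2:ℝ) = ((2:ℝ)^(2*(1+κ)))^((1:ℝ)/2 - κ/(2*(1+κ))) := hτa.symm
        _ ≤ δ^((1:ℝ)/2 - κ/(2*(1+κ))) := Real.rpow_le_rpow hτpos.le hτδ ha.le
    have hμDa : (∑ a, (if a ∈ D then μ a else 0))^((1:ℝ)/2 - κ/(2*(1+κ)))
        ≤ (∑ a, μ a)^((1:ℝ)/2 - κ/(2*(1+κ))) / 2 := by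
      calc (∑ a, (if a ∈ D then μ a else 0))^((1:ℝ)/2 - κ/(2*(1+κ)))
          ≤ ((∑ a, μ a)/δ)^((1:ℝ)/2 - κ/(2*(1+κ))) :=
            Real.rpow_le_rpow hμDsum0 hμDMδ ha.le
        _ = (∑ a, μ a)^((1:ℝ)/2 - κ/(2*(1+κ))) / δ^((1:ℝ)/2 - κ/(2*(1+κ))) :=
            Real.div_rpow hMpos.le hδpos.le _
        _ ≤ (∑ a, μ a)^((1:ℝ)/2 - κ/(2*(1+κ))) / 2 :=
            div_le_div_of_nonneg_left (Real.rpow_nonneg hMpos.le _)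
              two_pos hδa
    -- assemble
    rw [hsplit]
    have hMa0 : (0:ℝ) ≤ (∑ a, μ a)^((1:ℝ)/2 - κ/(2*(1+κ))) := Real.rpow_nonneg hMpos.le _
    have hRb0 : (0:ℝ) ≤ (∑ a, ρ a)^((1:ℝ)/2 + κ/(2*(1+κ))) := Real.rpow_nonneg hRpos.le _
    have hKd : (0:ℝ) ≤ 1 + 2 * C^((2:ℝ)/(1+κ)) * ((2:ℝ)^(2*(1+κ)))^(2*κ/(1+κ)) := by
      nlinarith
    have hTermB : (∑ b, (if hI (fun y => w y * hIstar μ y) b ≤ δ then 0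
          else w b * hIstar μ b * hIstar ρ b))
        ≤ (1 + 2 * C^((2:ℝ)/(1+κ)) * ((2:ℝ)^(2*(1+κ)))^(2*κ/(1+κ))) *
            ((∑ a, μ a)^((1:ℝ)/2 - κ/(2*(1+κ))) / 2) * (∑ a, ρ a)^((1:ℝ)/2 + κ/(2*(1+κ))) := by
      refine le_trans hTermB1 (le_trans hIH ?_)
      refine mul_le_mul_of_nonneg_right ?_ hRb0
      exact mul_le_mul_of_nonneg_left hμDa hKd
    have hfinal : C^((2:ℝ)/(1+κ)) * ((2:ℝ)^(2*(1+κ)))^(2*κ/(1+κ)) *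
            (∑ a, μ a)^((1:ℝ)/2 - κ/(2*(1+κ))) * (∑ a, ρ a)^((1:ℝ)/2 + κ/(2*(1+κ)))
        + (1 + 2 * C^((2:ℝ)/(1+κ)) * ((2:ℝ)^(2*(1+κ)))^(2*κ/(1+κ))) *
            ((∑ a, μ a)^((1:ℝ)/2 - κ/(2*(1+κ))) / 2) * (∑ a, ρ a)^((1:ℝ)/2 + κ/(2*(1+κ)))
        ≤ (1 + 2 * C^((2:ℝ)/(1+κ)) * ((2:ℝ)^(2*(1+κ)))^(2*κ/(1+κ))) *
            (∑ a, μ a)^((1:ℝ)/2 - κ/(2*(1+κ))) * (∑ a, ρ a)^((1:ℝ)/2 + κ/(2*(1+κ))) := by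
      have hprod0 : (0:ℝ) ≤ (∑ a, μ a)^((1:ℝ)/2 - κ/(2*(1+κ))) *
          (∑ a, ρ a)^((1:ℝ)/2 + κ/(2*(1+κ))) := mul_nonneg hMa0 hRb0
      have hcoef : C^((2:ℝ)/(1+κ)) * ((2:ℝ)^(2*(1+κ)))^(2*κ/(1+κ))
          + (1 + 2 * C^((2:ℝ)/(1+κ)) * ((2:ℝ)^(2*(1+κ)))^(2*κ/(1+κ))) / 2
          ≤ 1 + 2 * C^((2:ℝ)/(1+κ)) * ((2:ℝ)^(2*(1+κ)))^(2*κ/(1+κ)) := by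
        nlinarith [mul_nonneg hC2 hτe]
      calc C^((2:ℝ)/(1+κ)) * ((2:ℝ)^(2*(1+κ)))^(2*κ/(1+κ)) *
            (∑ a, μ a)^((1:ℝ)/2 - κ/(2*(1+κ))) * (∑ a, ρ a)^((1:ℝ)/2 + κ/(2*(1+κ)))
          + (1 + 2 * C^((2:ℝ)/(1+κ)) * ((2:ℝ)^(2*(1+κ)))^(2*κ/(1+κ))) *
            ((∑ a, μ a)^((1:ℝ)/2 - κ/(2*(1+κ))) / 2) * (∑ a, ρ a)^((1:ℝ)/2 + κ/(2*(1+κ)))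
          = (C^((2:ℝ)/(1+κ)) * ((2:ℝ)^(2*(1+κ)))^(2*κ/(1+κ))
              + (1 + 2 * C^((2:ℝ)/(1+κ)) * ((2:ℝ)^(2*(1+κ)))^(2*κ/(1+κ))) / 2) *
            ((∑ a, μ a)^((1:ℝ)/2 - κ/(2*(1+κ))) * (∑ a, ρ a)^((1:ℝ)/2 + κ/(2*(1+κ)))) := by
            ring
        _ ≤ (1 + 2 * C^((2:ℝ)/(1+κ)) * ((2:ℝ)^(2*(1+κ)))^(2*κ/(1+κ))) *
            ((∑ a, μ a)^((1:ℝ)/2 - κ/(2*(1+κ))) * (∑ a, ρ a)^((1:ℝ)/2 + κ/(2*(1+κ)))) :=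
            mul_le_mul_of_nonneg_right hcoef hprod0
        _ = (1 + 2 * C^((2:ℝ)/(1+κ)) * ((2:ℝ)^(2*(1+κ)))^(2*κ/(1+κ))) *
            (∑ a, μ a)^((1:ℝ)/2 - κ/(2*(1+κ))) * (∑ a, ρ a)^((1:ℝ)/2 + κ/(2*(1+κ))) := by
            ring
    exact le_trans (add_le_add hTermA hTermB) hfinal

end key

theorem stmt18 (κ C : ℝ) (hκ0 : 0 < κ) (hκ1 : κ ≤ 1) (hC : 0 ≤ C) :
    ∃ Cc : ℝ, ∀ (n : ℕ) (T : Fin n → Type)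
      [∀ i, Fintype (T i)] [∀ i, PartialOrder (T i)],
      (∀ i, IsTreeOrder (T i)) →
      ∀ w : (∀ i, T i) → ℝ, (∀ a, 0 ≤ w a) →
      -- surrogate maximum principle for the weight `w` with parameters `κ, C`
      (∀ (μ ρ : (∀ i, T i) → ℝ), (∀ a, 0 ≤ μ a) → (∀ a, 0 ≤ ρ a) →
        ∀ δ : ℝ, 0 < δ →
        ∑ a, hI (fun x =>
            (if hI (fun y => w y * hIstar μ y) x ≤ δ then 1 else 0) *
              (w x * hIstar μ x)) a * ρ a
          ≤ C * (δ * ∑ a, ρ a) ^ κ *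
            ((∑ a, (if hI (fun y => w y * hIstar μ y) a ≤ δ then 1 else 0) *
                (w a * hIstar μ a ^ 2)) *
              (∑ a, w a * hIstar ρ a ^ 2)) ^ ((1 - κ) / 2)) →
      ∀ μ ρ : (∀ i, T i) → ℝ, (∀ a, 0 ≤ μ a) → (∀ a, 0 ≤ ρ a) →
      -- hereditary Carleson constants at most `1`
      (∀ E : Set (∀ i, T i),
        (∑ a, w a * hIstar (fun x => if x ∈ E then μ x else 0) a ^ 2) ≤
          ∑ a, if a ∈ E then μ a else 0) →
      (∀ E : Set (∀ i, T i),
        (∑ a, w a * hIstar (fun x => if x ∈ E then ρ x else 0) a ^ 2) ≤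
          ∑ a, if a ∈ E then ρ a else 0) →
      ∑ a, hI (fun x => w x * hIstar μ x) a * ρ a ≤
        Cc * (∑ a, μ a) ^ ((1 : ℝ) / 2 - κ / (2 * (1 + κ))) *
          (∑ a, ρ a) ^ ((1 : ℝ) / 2 + κ / (2 * (1 + κ))) := by
  refine ⟨1 + 2 * C^((2:ℝ)/(1+κ)) * ((2:ℝ)^(2*(1+κ)))^(2*κ/(1+κ)), ?_⟩
  intro n T _ _ htree w hw hSMP μ ρ hμ hρ hCarμ hCarρ
  have h1κ : (0:ℝ) < 1 + κ := by linarith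
  rcases (Finset.sum_nonneg fun a (_ : a ∈ Finset.univ) => hρ a).eq_or_lt with hR0 | hRpos
  · have hρ0 : ∀ a ∈ Finset.univ, ρ a = 0 :=
      (Finset.sum_eq_zero_iff_of_nonneg fun a _ => hρ a).mp hR0.symm
    have hL : ∑ a, hI (fun x => w x * hIstar μ x) a * ρ a = 0 :=
      Finset.sum_eq_zero fun a _ => by rw [hρ0 a (Finset.mem_univ a), mul_zero]
    have hbpos : (0:ℝ) < (1:ℝ)/2 + κ/(2*(1+κ)) := by
      have := div_pos hκ0 (by linarith : (0:ℝ) < 2*(1+κ))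
      linarith
    rw [hL, ← hR0, Real.zero_rpow hbpos.ne', mul_zero]
  · obtain ⟨m, hm⟩ := exists_nat_ge ((∑ a, μ a) / (∑ a, ρ a))
    have h2m : (m:ℝ) ≤ 2^m := by
      have := (Nat.lt_two_pow_self (n := m)).le
      exact_mod_cast this
    have hmass : ∑ a, μ a ≤ 2^m * ∑ a, ρ a := by
      rw [div_le_iff₀ hRpos] at hm
      have := mul_le_mul_of_nonneg_right h2m hRpos.le
      linarith
    exact key hκ0 hκ1 hC w hw hSMP m μ ρ hμ hρ hCarμ hCarρ hmass
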